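/- Define sets of terms N, N_plus, N_app inductively: d, e ∈ N; N_plus ∪ N_app ⊆ N; if t ∈ N and t ≠ e then d·t ∈ N_app; if n ≥ 2 and t_1,…,t_n ∈ N_app ∪ {d} then the right-associated sum t_1 + (t_2 + ⋯ + (t_{n-1} + t_n)⋯) ∈ N_plus. Then N equals the set of normal forms of the rewrite system R. -/
import Mathlib


/-- Ground terms over constants d, e with binary operations + (add) and · (app). -/
inductive Tm : Type
  | d : Tm
  | e : Tm
  | add : Tm → Tm → Tm
  | app : Tm → Tm → Tm
  deriving DecidableEq

open Tm

/-- Root rewrite steps: instances of the oriented rules. -/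
inductive Root : Tm → Tm → Prop
  | addE (x) : Root (add x e) x
  | eAdd (x) : Root (add e x) x
  | assoc (x y z) : Root (add (add x y) z) (add x (add y z))
  | appAdd (x y z) : Root (app (add x y) z) (app y (app x z))
  | appD (x y) : Root (app (app d x) y) (app x (add y x))
  | appE (x) : Root (app e x) x
  | dE : Root (app d e) e

/-- One rewrite step: a root step applied at some subterm position. -/
inductive Step : Tm → Tm → Prop
  | root {t u} : Root t u → Step t u
  | addL {t t' u} : Step t t' → Step (add t u) (add t' u)
  | addR {t u u'} : Step u u' → Step (add t u) (add t u')
  | appL {t t' u} : Step t t' → Step (app t u) (app t' u)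
  | appR {t u u'} : Step u u' → Step (app t u) (app t u')

/-- Zero or more rewrite steps. -/
def Steps : Tm → Tm → Prop := Relation.ReflTransGen Step

/-- A normal form is a term to which no rule applies. -/
def NormalForm (t : Tm) : Prop := ∀ u, ¬ Step t u

/-- Provable equality in the equational theory (reflexive symmetric transitive
congruence closure of the rule instances). -/
def TermEq : Tm → Tm → Prop := Relation.EqvGen Step

mutual
  /-- N: the candidate set of normal forms. -/
  inductive N : Tm → Prop
    | d : N d
    | e : N e
    | ofApp {t} : Napp t → N t
    | ofPlus {t} : Nplus t → N t

  /-- Atoms for sums: elements of N_app together with d. -/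
  inductive NAtom : Tm → Prop
    | d : NAtom d
    | ofApp {t} : Napp t → NAtom t

  /-- N_app: terms d·t with t ∈ N, t ≠ e. -/
  inductive Napp : Tm → Prop
    | mk {t} : N t → t ≠ e → Napp (app d t)

  /-- N_plus: right-associated sums of at least two atoms from N_app ∪ {d}. -/
  inductive Nplus : Tm → Prop
    | two {a b} : NAtom a → NAtom b → Nplus (add a b)
    | cons {a b} : NAtom a → Nplus b → Nplus (add a b)
end

lemma natom_N {t : Tm} (h : NAtom t) : N t := by
  cases h with
  | d => exact N.d
  | ofApp h' => exact N.ofApp h'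

lemma natom_ne_e {t : Tm} (h : NAtom t) : t ≠ e := by
  cases h with
  | d => exact fun hc => nomatch hc
  | ofApp h' => cases h' with | mk _ _ => exact fun hc => nomatch hc

lemma nplus_ne_e {t : Tm} (h : Nplus t) : t ≠ e := by
  cases h with
  | two _ _ => exact fun hc => nomatch hc
  | cons _ _ => exact fun hc => nomatch hc

lemma nplus_N {t : Tm} (h : Nplus t) : N t := N.ofPlus h

lemma nf_of_N : ∀ t : Tm, N t → NormalForm t := by
  intro t
  induction t with
  | d => intro _ u hs; cases hs with | root r => cases r
  | e => intro _ u hs; cases hs with | root r => cases r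
  | add a b iha ihb =>
    intro h u hs
    have hp : Nplus (add a b) := by
      cases h with
      | ofApp h' => cases h'
      | ofPlus h' => exact h'
    have hA : NAtom a := by cases hp with | two h1 _ => exact h1 | cons h1 _ => exact h1
    have hBn : N b := by
      cases hp with
      | two _ h2 => exact natom_N h2
      | cons _ h2 => exact nplus_N h2
    have hBe : b ≠ e := by
      cases hp with
      | two _ h2 => exact natom_ne_e h2
      | cons _ h2 => exact nplus_ne_e h2
    cases hs with
    | root r =>
      cases r with
      | addE x => exact hBe rfl
      | eAdd x => exact natom_ne_e hA rfl
      | assoc x y z =>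
        cases hA with
        | ofApp h' => cases h'
    | addL hs' => exact iha (natom_N hA) _ hs'
    | addR hs' => exact ihb hBn _ hs'
  | app a b iha ihb =>
    intro h u hs
    have hp : Napp (app a b) := by
      cases h with
      | ofApp h' => exact h'
      | ofPlus h' => cases h'
    cases hp with
    | mk hN hne =>
      cases hs with
      | root r =>
        cases r with
        | dE => exact hne rfl
      | appL hs' => cases hs' with | root r => cases r
      | appR hs' => exact ihb hN _ hs'

lemma N_of_nf : ∀ t : Tm, NormalForm t → N t := by
  intro t
  induction t with
  | d => intro _; exact N.d
  | e => intro _; exact N.e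
  | add a b iha ihb =>
    intro h
    have ha : N a := iha (fun u hs => h _ (Step.addL hs))
    have hb : N b := ihb (fun u hs => h _ (Step.addR hs))
    have hae : a ≠ e := by rintro rfl; exact h b (Step.root (Root.eAdd b))
    have hbe : b ≠ e := by rintro rfl; exact h a (Step.root (Root.addE a))
    have hadd : ∀ x y, a ≠ add x y := by
      rintro x y rfl; exact h _ (Step.root (Root.assoc x y b))
    have hA : NAtom a := by
      cases ha with
      | d => exact NAtom.d
      | e => exact absurd rfl hae
      | ofApp h' => exact NAtom.ofApp h'
      | ofPlus h' =>
        cases h' with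
        | two _ _ => exact absurd rfl (hadd _ _)
        | cons _ _ => exact absurd rfl (hadd _ _)
    cases hb with
    | d => exact N.ofPlus (Nplus.two hA NAtom.d)
    | e => exact absurd rfl hbe
    | ofApp h' => exact N.ofPlus (Nplus.two hA (NAtom.ofApp h'))
    | ofPlus h' => exact N.ofPlus (Nplus.cons hA h')
  | app a b iha ihb =>
    intro h
    have ha : N a := iha (fun u hs => h _ (Step.appL hs))
    have hb : N b := ihb (fun u hs => h _ (Step.appR hs))
    cases ha with
    | d =>
      have hbe : b ≠ e := by rintro rfl; exact h _ (Step.root Root.dE)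
      exact N.ofApp (Napp.mk hb hbe)
    | e => exact absurd (Step.root (Root.appE b)) (h b)
    | ofApp h' =>
      cases h' with
      | mk _ _ => exact absurd (Step.root (Root.appD _ b)) (h _)
    | ofPlus h' =>
      cases h' with
      | two _ _ => exact absurd (Step.root (Root.appAdd _ _ b)) (h _)
      | cons _ _ => exact absurd (Step.root (Root.appAdd _ _ b)) (h _)

/-- N is exactly the set of normal forms of R. -/
theorem N_eq_normal_forms : ∀ t : Tm, N t ↔ NormalForm t := by
  intro t
  exact ⟨nf_of_N t, N_of_nf t⟩
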